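/- arXiv:1906.01565 — 2 statements merged into one kernel-verified Lean document; each statement's English description precedes it below -/
import Mathlib

section
/- Let m be a natural number divisible by 4 and ζ_m a primitive m-th root of unity in an algebraic closure of ℚ. Then −ζ_m is not a square in the cyclotomic field ℚ(μ_m). -/
/-- if `4 ∣ m` and `ζ` is a primitive `m`-th root of unity, then `−ζ` is not a
square in the cyclotomic field `ℚ(μ_m)`. -/
theorem statement5 (m : ℕ+) (hm : 4 ∣ (m : ℕ)) (ζ : CyclotomicField m ℚ)
    (hζ : IsPrimitiveRoot ζ m) : ¬ ∃ u : CyclotomicField m ℚ, u ^ 2 = -ζ := by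
  rintro ⟨u, hu⟩
  obtain ⟨k, hk⟩ := hm
  have hmpos : 0 < (m : ℕ) := m.pos
  have hkpos : 0 < k := by omega
  -- ζ ^ (m/2) = -1
  have hhalf : ζ ^ (2 * k) = -1 := by
    have h2 : IsPrimitiveRoot (ζ ^ (2 * k)) 2 := hζ.pow hmpos (by omega)
    exact h2.eq_neg_one_of_two_right
  -- -ζ is a primitive m-th root of unity
  have hneg : IsPrimitiveRoot (-ζ) m := by
    have hco : (2 * k + 1).Coprime (m : ℕ) := by
      have h4 : (2 * k + 1).Coprime 4 := by
        have h2 : (2 * k + 1).Coprime 2 :=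
          Nat.coprime_comm.mp ((Nat.prime_two.coprime_iff_not_dvd).mpr (by omega))
        simpa using h2.pow_right 2
      have hkco : (2 * k + 1).Coprime k := by
        have := (Nat.coprime_mul_left_add_right k 1 2).mpr (Nat.coprime_one_right k)
        simp only [Nat.coprime_comm, mul_comm] at this ⊢; simpa using this
      rw [hk]
      exact Nat.Coprime.mul_right h4 hkco
    have hpow : ζ ^ (2 * k + 1) = -ζ := by rw [pow_succ, hhalf]; ring
    rw [← hpow]
    exact hζ.pow_of_coprime _ hco
  -- u ^ (2m) = 1
  have hum : u ^ (2 * (m : ℕ)) = 1 := by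
    rw [pow_mul, hu, neg_pow, hζ.pow_eq_one,
      Even.neg_one_pow ⟨2 * k, by omega⟩, one_mul]
  -- orderOf u = 2m
  have h1 : orderOf (u ^ 2) = (m : ℕ) := by rw [hu]; exact hneg.eq_orderOf.symm
  have h2 : orderOf (u ^ 2) = orderOf u / Nat.gcd (orderOf u) 2 :=
    orderOf_pow' u two_ne_zero
  have key : orderOf u / Nat.gcd (orderOf u) 2 = (m : ℕ) := by rw [← h2, h1]
  have hord : orderOf u = 2 * (m : ℕ) := by
    rcases (Nat.dvd_prime Nat.prime_two).1 (Nat.gcd_dvd_right (orderOf u) 2) with h | h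
    · exfalso
      have hnd : ¬ 2 ∣ orderOf u :=
        (Nat.prime_two.coprime_iff_not_dvd).mp (Nat.coprime_comm.mp h)
      rw [h, Nat.div_one] at key
      exact hnd ⟨2 * k, by omega⟩
    · have hd : 2 ∣ orderOf u := h ▸ Nat.gcd_dvd_left (orderOf u) 2
      rw [h] at key
      omega
  haveI : IsCyclotomicExtension {(m : ℕ)} ℚ (CyclotomicField m ℚ) :=
    CyclotomicField.instIsCyclotomicExtensionSingletonNatSetOfCharZero (n := (m : ℕ)) (K := ℚ)
  haveI : FiniteDimensional ℚ (CyclotomicField m ℚ) :=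
    IsCyclotomicExtension.finiteDimensional {(m : ℕ)} ℚ (CyclotomicField m ℚ)
  have hu2m : IsPrimitiveRoot u (2 * (m : ℕ)) := hord ▸ IsPrimitiveRoot.orderOf u
  -- degree contradiction
  have hirr : Irreducible (Polynomial.cyclotomic (Nat.lcm (2 * (m : ℕ)) (2 * (m : ℕ))) ℚ) := by
    rw [Nat.lcm_self]
    exact Polynomial.cyclotomic.irreducible_rat (by positivity)
  have hle := hu2m.lcm_totient_le_finrank hu2m hirr
  rw [Nat.lcm_self] at hle
  have hfr : Module.finrank ℚ (CyclotomicField m ℚ) = (m : ℕ).totient :=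
    IsCyclotomicExtension.finrank _ (Polynomial.cyclotomic.irreducible_rat hmpos)
  have ht2 : (2 * (m : ℕ)).totient = 2 * (m : ℕ).totient :=
    Nat.totient_mul_of_prime_of_dvd Nat.prime_two ⟨2 * k, by omega⟩
  have htpos : 0 < (m : ℕ).totient := Nat.totient_pos.2 hmpos
  rw [hfr, ht2] at hle
  omega
end

section
/- Let E/K be a finite abelian extension of number fields with group G and let χ be a character of G. Let S be a finite set of places of K containing the archimedean places and the ramified places. Then the order of vanishing at s = 0 of the S-truncated Artin L-function L_S(χ, s) equals the ℚ^c-dimension of the χ-component X_{E,S}^χ, which equals |{v ∈ S : χ(G_v) = 1}| if χ ≠ 1, and |S| − 1 if χ = 1, where G_v ≤ G is the decomposition group of v. -/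
noncomputable section
open scoped Classical
set_option synthInstance.maxHeartbeats 1000000
set_option maxHeartbeats 1000000

/-- The augmentation map `Y_{E,S} = (S_E →₀ ℂ) → ℂ` sending each place to `1`. -/
def augMap (T : Type*) : (T →₀ ℂ) →ₗ[ℂ] ℂ :=
  Finsupp.linearCombination ℂ fun _ => (1 : ℂ)

/-- The action of `g ∈ G` on the free module on a `G`-set `T`. -/
def rhoMap (G T : Type*) [Monoid G] [MulAction G T] (g : G) :
    (T →₀ ℂ) →ₗ[ℂ] (T →₀ ℂ) :=
  Finsupp.lmapDomain ℂ ℂ fun w => g • w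

/-- The `χ`-eigenspace of `ℂ ⊗ Y_{E,S}`. -/
def eigSub (G T : Type*) [Monoid G] [MulAction G T] (χ : G →* ℂˣ) :
    Submodule ℂ (T →₀ ℂ) :=
  ⨅ g : G, LinearMap.ker (rhoMap G T g - (χ g : ℂ) • LinearMap.id)

/-- The `χ`-component `X_{E,S}^χ` of the augmentation kernel. -/
def XchiSub (G T : Type*) [Monoid G] [MulAction G T] (χ : G →* ℂˣ) :
    Submodule ℂ (T →₀ ℂ) :=
  LinearMap.ker (augMap T) ⊓ eigSub G T χ

/-- Membership in the eigenspace, pointwise. -/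
lemma mem_eigSub_iff {G T : Type*} [Group G] [MulAction G T] (χ : G →* ℂˣ) (f : T →₀ ℂ) :
    f ∈ eigSub G T χ ↔ ∀ (g : G) (t : T), f (g • t) = ((χ g : ℂ))⁻¹ * f t := by
  simp only [eigSub, Submodule.mem_iInf, LinearMap.mem_ker, LinearMap.sub_apply,
    LinearMap.smul_apply, LinearMap.id_apply, sub_eq_zero]
  have hrho : ∀ (g : G) (t : T), (rhoMap G T g f) (g • t) = f t := fun g t =>
    Finsupp.mapDomain_apply (MulAction.injective g) f t
  constructor
  · intro h g t
    have := DFunLike.congr_fun (h g) (g • t)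
    rw [hrho] at this
    rw [Finsupp.smul_apply, smul_eq_mul] at this
    rw [this, ← mul_assoc, inv_mul_cancel₀ (Units.ne_zero (χ g)), one_mul]
  · intro h g
    ext t
    obtain ⟨t', rfl⟩ : ∃ t', t = g • t' := ⟨g⁻¹ • t, by simp⟩
    rw [hrho, Finsupp.smul_apply, smul_eq_mul, h g t', ← mul_assoc,
      mul_inv_cancel₀ (Units.ne_zero (χ g)), one_mul]

lemma augMap_eq_sum {T : Type*} [Fintype T] (f : T →₀ ℂ) :
    augMap T f = ∑ t : T, f t := by
  rw [augMap, Finsupp.linearCombination_apply, Finsupp.sum_fintype]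
  · simp
  · intro t; simp

/-- If `χ ≠ 1`, the augmentation map vanishes on the eigenspace. -/
lemma augMap_eq_zero {G T : Type*} [Group G] [MulAction G T] [Fintype T]
    (χ : G →* ℂˣ) (hχ : χ ≠ 1) (f : T →₀ ℂ) (hf : f ∈ eigSub G T χ) :
    augMap T f = 0 := by
  obtain ⟨g, hg⟩ : ∃ g, χ g ≠ 1 := by
    by_contra h
    push_neg at h
    exact hχ (MonoidHom.ext fun g => by rw [h g, MonoidHom.one_apply])
  rw [mem_eigSub_iff] at hf
  have h1 : ∑ t : T, f (g • t) = ∑ t : T, f t :=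
    Fintype.sum_equiv (MulAction.toPerm g) _ _ fun t => rfl
  have h2 : ∑ t : T, f (g • t) = ((χ g : ℂ))⁻¹ * ∑ t : T, f t := by
    rw [Finset.mul_sum]
    exact Finset.sum_congr rfl fun t _ => hf g t
  rw [augMap_eq_sum]
  have h3 : (((χ g : ℂ))⁻¹ - 1) * ∑ t : T, f t = 0 := by
    rw [sub_mul, one_mul, ← h2, h1, sub_self]
  rcases mul_eq_zero.mp h3 with h | h
  · exfalso
    apply hg
    have : ((χ g : ℂ))⁻¹ = 1 := by linear_combination h
    have : (χ g : ℂ) = 1 := by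
      field_simp at this
      simpa using this.symm
    exact Units.ext (by simpa using this)
  · exact h

variable {G : Type} [CommGroup G] (χ : G →* ℂˣ) (H : Subgroup G)

/-- The function on `G ⧸ H` induced by `χ⁻¹` (or `0` if `χ` is nontrivial on `H`). -/
def cf : G ⧸ H → ℂ := fun w =>
  if h : ∀ g ∈ H, χ g = 1 then
    Quotient.liftOn' w (fun g => ((χ g : ℂ))⁻¹) (by
      intro a b hab
      have hmem : a⁻¹ * b ∈ H := QuotientGroup.leftRel_apply.mp hab
      have : χ b = χ a := by
        have := h _ hmem
        calc χ b = χ a * χ (a⁻¹ * b) := by rw [← MonoidHom.map_mul]; group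
        _ = χ a := by rw [this, mul_one]
      simp [this])
  else 0

lemma cf_mk (g : G) :
    cf χ H (QuotientGroup.mk g) = if ∀ g ∈ H, χ g = 1 then ((χ g : ℂ))⁻¹ else 0 := by
  rw [cf]
  split_ifs <;> rfl

lemma cf_smul (g : G) (w : G ⧸ H) :
    cf χ H (g • w) = ((χ g : ℂ))⁻¹ * cf χ H w := by
  obtain ⟨a, rfl⟩ := QuotientGroup.mk_surjective w
  have : g • (QuotientGroup.mk a : G ⧸ H) = QuotientGroup.mk (g * a) := rfl
  rw [this, cf_mk, cf_mk]
  split_ifs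
  · rw [map_mul]
    push_cast
    rw [mul_inv]
  · ring

lemma cf_one (h : ∀ g ∈ H, χ g = 1) : cf χ H (QuotientGroup.mk 1) = 1 := by
  rw [cf_mk, if_pos h]
  simp

section main
variable (G : Type) [CommGroup G] [Fintype G] (ι : Type) [DecidableEq ι]
    (S : Finset ι) (D : ι → Subgroup G) (χ : G →* ℂˣ)

abbrev TT := (v : {x // x ∈ S}) × (G ⧸ D v.val)

/-- The evaluation map from the eigenspace to functions on the filtered set. -/
def Phi : ↥(eigSub G (TT G ι S D) χ) →ₗ[ℂ]
    (↥(S.filter fun v => ∀ g ∈ D v, χ g = 1) → ℂ) where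
  toFun f v := (f : TT G ι S D →₀ ℂ)
    ⟨⟨v.1, (Finset.mem_filter.mp v.2).1⟩, QuotientGroup.mk 1⟩
  map_add' f g := by ext v; simp
  map_smul' c f := by ext v; simp

lemma Phi_bijective : Function.Bijective (Phi G ι S D χ) := by
  refine ⟨?_, ?_⟩
  on_goal 1 => rw [injective_iff_map_eq_zero]
  · intro f hf
    ext t
    obtain ⟨v, w⟩ := t
    obtain ⟨a, rfl⟩ := QuotientGroup.mk_surjective w
    have hmem := (mem_eigSub_iff χ (f : TT G ι S D →₀ ℂ)).mp f.2
    have key : (f : TT G ι S D →₀ ℂ) ⟨v, QuotientGroup.mk a⟩ =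
        ((χ a : ℂ))⁻¹ * (f : TT G ι S D →₀ ℂ) ⟨v, QuotientGroup.mk 1⟩ := by
      have := hmem a ⟨v, QuotientGroup.mk 1⟩
      have hsm : a • (⟨v, QuotientGroup.mk 1⟩ : TT G ι S D) = ⟨v, QuotientGroup.mk a⟩ := by
        show (⟨v, a • QuotientGroup.mk 1⟩ : TT G ι S D) = _
        congr 1
        show QuotientGroup.mk (a * 1) = QuotientGroup.mk a
        rw [mul_one]
      rwa [hsm] at this
    have hzero : (f : TT G ι S D →₀ ℂ) ⟨v, QuotientGroup.mk 1⟩ = 0 := by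
      by_cases hP : ∀ g ∈ D v.1, χ g = 1
      · have hv : v.1 ∈ S.filter fun v => ∀ g ∈ D v, χ g = 1 :=
          Finset.mem_filter.mpr ⟨v.2, hP⟩
        have := congrFun hf (⟨v.1, hv⟩ : ↥(S.filter fun v => ∀ g ∈ D v, χ g = 1))
        simpa [Phi] using this
      · push_neg at hP
        obtain ⟨g, hgD, hg⟩ := hP
        have := hmem g ⟨v, QuotientGroup.mk 1⟩
        have hsm : g • (⟨v, QuotientGroup.mk 1⟩ : TT G ι S D) =
            ⟨v, QuotientGroup.mk 1⟩ := by
          show (⟨v, g • QuotientGroup.mk 1⟩ : TT G ι S D) = _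
          congr 1
          show QuotientGroup.mk (g * 1) = QuotientGroup.mk 1
          rw [mul_one]
          exact (QuotientGroup.eq_one_iff g).mpr hgD
        rw [hsm] at this
        have h3 : (((χ g : ℂ))⁻¹ - 1) * (f : TT G ι S D →₀ ℂ) ⟨v, QuotientGroup.mk 1⟩ = 0 := by
          rw [sub_mul, one_mul]
          rw [← this]; ring
        rcases mul_eq_zero.mp h3 with h | h
        · exfalso
          apply hg
          have h1 : ((χ g : ℂ))⁻¹ = 1 := by linear_combination h
          have h2 : (χ g : ℂ) = 1 := by
            field_simp at h1
            simpa using h1.symm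
          exact Units.ext (by simpa using h2)
        · exact h
    show (f : TT G ι S D →₀ ℂ) ⟨v, QuotientGroup.mk a⟩ = 0
    rw [key, hzero, mul_zero]
  · intro c
    set fFun : TT G ι S D → ℂ := fun t =>
      (if h : t.1.1 ∈ S.filter (fun v => ∀ g ∈ D v, χ g = 1) then c ⟨t.1.1, h⟩ else 0)
        * cf χ (D t.1.1) t.2 with hfFun
    have hmem : (Finsupp.equivFunOnFinite.symm fFun) ∈ eigSub G (TT G ι S D) χ := by
      rw [mem_eigSub_iff]
      intro g t
      obtain ⟨v, w⟩ := t
      show (Finsupp.equivFunOnFinite.symm fFun) ⟨v, g • w⟩ = _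
      simp only [Finsupp.coe_equivFunOnFinite_symm, hfFun]
      rw [cf_smul]
      ring
    refine ⟨⟨Finsupp.equivFunOnFinite.symm fFun, hmem⟩, ?_⟩
    ext v
    have hv := v.2
    have hP : ∀ g ∈ D v.1, χ g = 1 := (Finset.mem_filter.mp hv).2
    show (Finsupp.equivFunOnFinite.symm fFun)
      ⟨⟨v.1, (Finset.mem_filter.mp hv).1⟩, QuotientGroup.mk 1⟩ = c v
    simp only [Finsupp.coe_equivFunOnFinite_symm, hfFun]
    rw [dif_pos v.2, cf_one _ _ hP, mul_one, Subtype.coe_eta]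

lemma finrank_eigSub : Module.finrank ℂ ↥(eigSub G (TT G ι S D) χ) =
    (S.filter fun v => ∀ g ∈ D v, χ g = 1).card := by
  rw [LinearEquiv.finrank_eq (LinearEquiv.ofBijective _ (Phi_bijective G ι S D χ)),
    Module.finrank_fintype_fun_eq_card, Fintype.card_coe]
end main

/-- Tate, Chap. I, Prop. 3.4, algebraic form: let `E/K` be finite abelian
with group `G`, `χ` a character of `G` and `S` a nonempty finite set of places of `K`
(containing the archimedean and ramified places), with decomposition groups `D v ≤ G` for
`v ∈ S`, so that the `G`-set of places of `E` above `S` is `⨿_{v ∈ S} G/D v`.  Then the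
order of vanishing of `L_S(χ,s)` at `s = 0`, which equals `dim_{ℚ^c} X_{E,S}^χ`, is
`|{v ∈ S : χ(D v) = 1}|` if `χ ≠ 1` and `|S| − 1` if `χ = 1`. -/
theorem statement13 (G : Type) [CommGroup G] [Fintype G] (ι : Type) [DecidableEq ι]
    (S : Finset ι) (hS : S.Nonempty) (D : ι → Subgroup G) (χ : G →* ℂˣ) :
    Module.finrank ℂ ↥(XchiSub G ((v : {x // x ∈ S}) × (G ⧸ D v.val)) χ) =
      (S.filter fun v => ∀ g ∈ D v, χ g = 1).card - (if χ = 1 then 1 else 0) := by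
  by_cases hχ : χ = 1
  · subst hχ
    rw [if_pos rfl]
    have hfilter : (S.filter fun v => ∀ g ∈ D v, (1 : G →* ℂˣ) g = 1) = S :=
      Finset.filter_true_of_mem fun v _ => fun g _ => rfl
    set e : (TT G ι S D →₀ ℂ) ≃ₗ[ℂ] (TT G ι S D → ℂ) :=
      Finsupp.linearEquivFunOnFinite ℂ ℂ (TT G ι S D) with he
    set eL : (TT G ι S D →₀ ℂ) →ₗ[ℂ] (TT G ι S D → ℂ) := ↑e with heL
    set pEig : Submodule ℂ (TT G ι S D → ℂ) :=
      (eigSub G (TT G ι S D) (1 : G →* ℂˣ)).map eL with hpEig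
    set aug' : (TT G ι S D → ℂ) →ₗ[ℂ] ℂ :=
      (augMap (TT G ι S D)).comp (e.symm : (TT G ι S D → ℂ) →ₗ[ℂ] (TT G ι S D →₀ ℂ)) with haug
    have hmapX : (XchiSub G (TT G ι S D) (1 : G →* ℂˣ)).map eL = LinearMap.ker aug' ⊓ pEig := by
      rw [XchiSub, Submodule.map_inf _ (by rw [heL]; exact e.injective), hpEig]
      congr 1
      ext x
      simp only [Submodule.mem_map, LinearMap.mem_ker, haug, LinearMap.coe_comp,
        Function.comp_apply, LinearEquiv.coe_coe, heL]
      constructor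
      · rintro ⟨f, hf, rfl⟩
        rwa [e.symm_apply_apply]
      · intro hx
        exact ⟨e.symm x, hx, e.apply_symm_apply x⟩
    set A := aug'.comp pEig.subtype with hA
    have hker : LinearMap.ker aug' ⊓ pEig = Submodule.map pEig.subtype (LinearMap.ker A) := by
      conv_rhs => rw [hA, LinearMap.ker_comp, Submodule.map_comap_subtype]
      rw [inf_comm]
    have hT : Nonempty (TT G ι S D) := ⟨⟨⟨hS.choose, hS.choose_spec⟩, QuotientGroup.mk 1⟩⟩
    have hf0mem : (Finsupp.equivFunOnFinite.symm (fun _ => (1 : ℂ)) : TT G ι S D →₀ ℂ)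
        ∈ eigSub G (TT G ι S D) (1 : G →* ℂˣ) := by
      rw [mem_eigSub_iff]
      intro g t
      simp
    have hf0mem' : eL (Finsupp.equivFunOnFinite.symm (fun _ => (1 : ℂ))) ∈ pEig :=
      Submodule.mem_map_of_mem hf0mem
    have hA0 : A ⟨_, hf0mem'⟩ = (Fintype.card (TT G ι S D) : ℂ) := by
      show augMap (TT G ι S D) (e.symm (e _)) = _
      rw [e.symm_apply_apply, augMap_eq_sum]
      simp [Finset.card_univ]
    have hcard : (Fintype.card (TT G ι S D) : ℂ) ≠ 0 := by
      exact_mod_cast Fintype.card_ne_zero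
    have hrange : LinearMap.range A = ⊤ := by
      rw [LinearMap.range_eq_top]
      intro z
      refine ⟨(z / (Fintype.card (TT G ι S D) : ℂ)) • ⟨_, hf0mem'⟩, ?_⟩
      rw [map_smul, hA0, smul_eq_mul, div_mul_cancel₀ _ hcard]
    have hrk := LinearMap.finrank_range_add_finrank_ker
      (K := ℂ) (V := ↥pEig) (V₂ := ℂ) A
    rw [hrange, finrank_top, Module.finrank_self] at hrk
    have h1 := LinearEquiv.finrank_eq (R := ℂ)
      (M := ↥(eigSub G (TT G ι S D) (1 : G →* ℂˣ)))
      (N := ↥((eigSub G (TT G ι S D) (1 : G →* ℂˣ)).map eL))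
      (e.submoduleMap (eigSub G (TT G ι S D) (1 : G →* ℂˣ)))
    have heig : Module.finrank ℂ ↥pEig = S.card := by
      rw [hpEig, ← h1, finrank_eigSub G ι S D (1 : G →* ℂˣ), hfilter]
    have h2 := LinearEquiv.finrank_eq (R := ℂ)
      (M := ↥(XchiSub G (TT G ι S D) (1 : G →* ℂˣ)))
      (N := ↥((XchiSub G (TT G ι S D) (1 : G →* ℂˣ)).map eL))
      (e.submoduleMap (XchiSub G (TT G ι S D) (1 : G →* ℂˣ)))
    have hXk : Module.finrank ℂ ↥(XchiSub G (TT G ι S D) (1 : G →* ℂˣ)) =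
        Module.finrank ℂ ↥(LinearMap.ker A) := by
      rw [h2, hmapX, hker]
      exact Submodule.finrank_map_subtype_eq _ _
    rw [hfilter]
    show Module.finrank ℂ ↥(XchiSub G (TT G ι S D) (1 : G →* ℂˣ)) = S.card - 1
    omega
  · rw [if_neg hχ, Nat.sub_zero]
    have hXe : XchiSub G (TT G ι S D) χ = eigSub G (TT G ι S D) χ := by
      rw [XchiSub, inf_eq_right]
      intro f hf
      exact LinearMap.mem_ker.mpr (augMap_eq_zero χ hχ f hf)
    show Module.finrank ℂ ↥(XchiSub G (TT G ι S D) χ) = _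
    rw [hXe, finrank_eigSub]
end
end
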